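/- Let p be a prime and n ≥ 1. Then there exist polynomials P, Q ∈ ℤ[X] such that p = P(X)·(X − 1)^{(p−1)p^{n−1}} + Q(X)·Φ_{p^n}(X), where Φ_{p^n} is the (p^n)-th cyclotomic polynomial. -/
import Mathlib


open Polynomial

/-- For a prime `p` and `n ≥ 1`, there exist `P, Q ∈ ℤ[X]` with
`p = P·(X − 1)^((p−1)p^(n−1)) + Q·Φ_{p^n}(X)`. -/
theorem exists_bezout_cyclotomic (p n : ℕ) (hp : p.Prime) (hn : 1 ≤ n) :
    ∃ P Q : Polynomial ℤ,
      (C (p : ℤ)) = P * (X - 1) ^ ((p - 1) * p ^ (n - 1)) + Q * cyclotomic (p ^ n) ℤ := by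
  haveI : Fact p.Prime := ⟨hp⟩
  obtain ⟨m, rfl⟩ : ∃ m, n = m + 1 := ⟨n - 1, by omega⟩
  simp only [Nat.add_sub_cancel]
  set d := (p - 1) * p ^ m with hd
  have hdd : d = p ^ (m + 1) - p ^ m := by
    rw [hd, Nat.sub_mul, one_mul, ← pow_succ']
  have hd0 : d ≠ 0 := by
    rw [hd]
    exact Nat.mul_ne_zero (Nat.sub_ne_zero_of_lt hp.one_lt) (pow_ne_zero _ hp.pos.ne')
  have hmap : (cyclotomic (p ^ (m + 1)) ℤ).map (Int.castRingHom (ZMod p)) = (X - 1) ^ d := by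
    rw [map_cyclotomic]
    have := cyclotomic_mul_prime_pow_eq (ZMod p) (p := p) (m := 1)
      (by simp [hp.one_lt.ne']) (Nat.succ_pos m)
    simpa [cyclotomic_one, hdd] using this
  have hdvd : C (p : ℤ) ∣ cyclotomic (p ^ (m + 1)) ℤ - (X - 1) ^ d := by
    rw [C_dvd_iff_dvd_coeff]
    intro i
    have : ((cyclotomic (p ^ (m + 1)) ℤ - (X - 1) ^ d).map
        (Int.castRingHom (ZMod p))).coeff i = 0 := by
      rw [Polynomial.map_sub, hmap, Polynomial.map_pow, Polynomial.map_sub, map_X,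
        Polynomial.map_one, sub_self, coeff_zero]
    rw [coeff_map] at this
    exact_mod_cast (ZMod.intCast_zmod_eq_zero_iff_dvd _ p).mp this
  obtain ⟨R, hR⟩ := hdvd
  have hR1 : R.eval 1 = 1 := by
    have h1 := congrArg (eval 1) hR
    simp only [eval_sub, eval_pow, eval_X, eval_one, sub_self, eval_mul, eval_C] at h1
    rw [eval_one_cyclotomic_prime_pow, zero_pow hd0, sub_zero] at h1
    have hp0 : (p : ℤ) ≠ 0 := Int.natCast_ne_zero.mpr hp.ne_zero
    exact mul_left_cancel₀ hp0 (by linarith)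
  have hT : (X - C (1:ℤ)) ∣ (R - 1) := by
    rw [dvd_iff_isRoot]
    simp [IsRoot, hR1]
  obtain ⟨T, hTe⟩ := hT
  set y : Polynomial ℤ := -((X - 1) * T) with hy
  have hRy : R = 1 - y := by
    rw [hy]; simp only [map_one] at hTe; linear_combination hTe
  set S : Polynomial ℤ := ∑ i ∈ Finset.range d, y ^ i with hS
  have hSR : S * R = 1 - y ^ d := by
    have h := geom_sum_mul y d
    rw [hRy]
    linear_combination -h
  refine ⟨C (p : ℤ) * (-1) ^ d * T ^ d - S, S, ?_⟩
  have hyd : y ^ d = (-1) ^ d * ((X - 1) ^ d * T ^ d) := by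
    rw [hy, neg_pow, mul_pow]
  have key : S * (cyclotomic (p ^ (m + 1)) ℤ - (X - 1) ^ d) =
      C (p : ℤ) * (1 - (-1) ^ d * ((X - 1) ^ d * T ^ d)) := by
    rw [hR, ← mul_assoc, mul_comm S (C (p:ℤ)), mul_assoc, hSR, hyd]
  linear_combination -key
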